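/- Let ε > 0, α > 0, i ∈ {1,2}, k ∈ {1,2}, p ∈ {1,2}. With D_ε(u,v) = (1/2) ∫_{ℝ²} (u(x) − v(x))² / ((∂₁v(x))² + ε) dx, R(u) = (1/p) ∫_{ℝ²} |∂_i^k u(x)|^p dx, and F_ε(u; v) = D_ε(u,v) + α R(u), suppose (u_m)_{m≥0} is a sequence of differentiable functions with u_0 = u^δ such that for each m ≥ 1, u_m minimizes F_ε(·; u_{m−1}) (i.e., F_ε(u_m; u_{m−1}) ≤ F_ε(w; u_{m−1}) for all admissible w), all occurring integrals are finite, and u_m − u_{m−1} ∈ L²(ℝ²) for all m ≥ 1. If there exists a constant C > 0 with sup_{m ≥ 0} ‖∂₁u_m‖_{L^∞(ℝ²)} = C < ∞, then ‖u_m − u_{m−1}‖_{L²(ℝ²)} → 0 as m → ∞. -/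

import Mathlib

open MeasureTheory Filter

/-- `∂₁ v`: the partial derivative of `v` in the first coordinate direction. -/
noncomputable def pd1 (v : ℝ × ℝ → ℝ) (x : ℝ × ℝ) : ℝ :=
  deriv (fun t => v (x.1 + t, x.2)) 0

/-- The `i`-th standard basis vector of `ℝ²` (for `i = 1` or `i = 2`). -/
def eVec (i : ℕ) : ℝ × ℝ := if i = 1 then (1, 0) else (0, 1)

/-- `∂ᵢᵏ u`: the `k`-th partial derivative of `u` in the `i`-th coordinate
direction, i.e. the `k`-th derivative of `t ↦ u (x + t eᵢ)` at `t = 0`. -/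
noncomputable def pdik (i k : ℕ) (u : ℝ × ℝ → ℝ) (x : ℝ × ℝ) : ℝ :=
  iteratedDeriv k (fun t : ℝ => u (x + t • eVec i)) 0

/-- The data term `D_ε(u, v) = (1/2) ∫ (u - v)² / ((∂₁ v)² + ε)`. -/
noncomputable def dataTerm (ε : ℝ) (u v : ℝ × ℝ → ℝ) : ℝ :=
  (1 / 2) * ∫ x : ℝ × ℝ, (u x - v x) ^ 2 / ((pd1 v x) ^ 2 + ε)

/-- The regularizer `R(u) = (1/p) ∫ |∂ᵢᵏ u|^p`. -/
noncomputable def regTerm (i k p : ℕ) (u : ℝ × ℝ → ℝ) : ℝ :=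
  (1 / (p : ℝ)) * ∫ x : ℝ × ℝ, |pdik i k u x| ^ p

/-- The functional `F_ε(u; v) = D_ε(u, v) + α R(u)`. -/
noncomputable def Feps (ε α : ℝ) (i k p : ℕ) (u v : ℝ × ℝ → ℝ) : ℝ :=
  dataTerm ε u v + α * regTerm i k p u

/-- If the partial derivatives `∂₁ u_m` are uniformly essentially
bounded (with supremum `C > 0`), then for the iteration `u_m := argmin F_ε(·; u_{m-1})`
one has `‖u_m − u_{m−1}‖_{L²} → 0` as `m → ∞`. -/
theorem consecutive_differences_tend_to_zero
    (ε α : ℝ) (hε : 0 < ε) (hα : 0 < α)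
    (i k p : ℕ) (hi : i = 1 ∨ i = 2) (hk : k = 1 ∨ k = 2) (hp : p = 1 ∨ p = 2)
    (A : Set (ℝ × ℝ → ℝ)) (uδ : ℝ × ℝ → ℝ) (u : ℕ → ℝ × ℝ → ℝ)
    (h0 : u 0 = uδ)
    (hdiff : ∀ m, Differentiable ℝ (u m))
    (hmem : ∀ m, u m ∈ A)
    (hintD : ∀ m, Integrable
      (fun x : ℝ × ℝ => (u (m + 1) x - u m x) ^ 2 / ((pd1 (u m) x) ^ 2 + ε)))
    (hintR : ∀ m, Integrable (fun x : ℝ × ℝ => |pdik i k (u m) x| ^ p))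
    (hmin : ∀ m, 1 ≤ m → ∀ w ∈ A,
      Feps ε α i k p (u m) (u (m - 1)) ≤ Feps ε α i k p w (u (m - 1)))
    (hL2 : ∀ m, MemLp (fun x : ℝ × ℝ => u (m + 1) x - u m x) 2 volume)
    (C : ℝ) (hC : 0 < C)
    (hsup : (⨆ m : ℕ, eLpNorm (fun x : ℝ × ℝ => pd1 (u m) x) ⊤ volume)
      = ENNReal.ofReal C) :
    Filter.Tendsto
      (fun m : ℕ => eLpNorm (fun x : ℝ × ℝ => u (m + 1) x - u m x) 2 volume)
      Filter.atTop (nhds 0) := by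

  classical
  set D : ℕ → ℝ := fun m => dataTerm ε (u (m + 1)) (u m) with hDdef
  set R : ℕ → ℝ := fun m => regTerm i k p (u m) with hRdef
  have hDnn : ∀ m, 0 ≤ D m := by
    intro m
    apply mul_nonneg (by norm_num)
    apply integral_nonneg
    intro x
    positivity
  have hRnn : ∀ m, 0 ≤ R m := by
    intro m
    apply mul_nonneg (by positivity)
    apply integral_nonneg
    intro x
    positivity
  have hkey : ∀ m, D m + α * R (m + 1) ≤ α * R m := by
    intro m
    have h := hmin (m + 1) (Nat.le_add_left 1 m) (u m) (hmem m)
    simp only [Nat.add_sub_cancel] at h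
    unfold Feps at h
    have h0' : dataTerm ε (u m) (u m) = 0 := by
      unfold dataTerm
      simp
    rw [h0'] at h
    simpa [hDdef, hRdef] using h
  have hpart : ∀ N, (∑ m ∈ Finset.range N, D m) + α * R N ≤ α * R 0 := by
    intro N
    induction N with
    | zero => simp
    | succ N ih =>
      rw [Finset.sum_range_succ]
      have := hkey N
      linarith
  have hsummable : Summable D := by
    apply summable_of_sum_range_le (c := α * R 0) hDnn
    intro N
    have h1 := hpart N
    have h2 : 0 ≤ α * R N := mul_nonneg hα.le (hRnn N)
    linarith
  have hDto0 : Tendsto D atTop (nhds 0) := hsummable.tendsto_atTop_zero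
  -- a.e. bound on pd1
  have hCae : ∀ m, ∀ᵐ x : ℝ × ℝ, |pd1 (u m) x| ≤ C := by
    intro m
    have h1 : eLpNorm (fun x : ℝ × ℝ => pd1 (u m) x) ⊤ volume ≤ ENNReal.ofReal C := by
      rw [← hsup]
      exact le_iSup (fun m => eLpNorm (fun x : ℝ × ℝ => pd1 (u m) x) ⊤ volume) m
    rw [eLpNorm_exponent_top] at h1
    filter_upwards [ae_le_eLpNormEssSup
      (f := fun x : ℝ × ℝ => pd1 (u m) x) (μ := volume)] with x hx
    have h2 : (‖pd1 (u m) x‖₊ : ENNReal) ≤ ENNReal.ofReal C := hx.trans h1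
    have h3 := ENNReal.toReal_mono ENNReal.ofReal_ne_top h2
    rw [ENNReal.toReal_ofReal hC.le] at h3
    simpa [Real.norm_eq_abs] using h3
  -- bound on the integral of the square
  have hIbound : ∀ m, (∫ x : ℝ × ℝ, (u (m + 1) x - u m x) ^ 2)
      ≤ 2 * (C ^ 2 + ε) * D m := by
    intro m
    have hfint : Integrable (fun x : ℝ × ℝ => (u (m + 1) x - u m x) ^ 2) := by
      exact (memLp_two_iff_integrable_sq (hL2 m).aestronglyMeasurable).1 (hL2 m)
    have hgint : Integrable (fun x : ℝ × ℝ =>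
        (C ^ 2 + ε) * ((u (m + 1) x - u m x) ^ 2 / ((pd1 (u m) x) ^ 2 + ε))) :=
      (hintD m).const_mul _
    have hae : ∀ᵐ x : ℝ × ℝ, (u (m + 1) x - u m x) ^ 2
        ≤ (C ^ 2 + ε) * ((u (m + 1) x - u m x) ^ 2 / ((pd1 (u m) x) ^ 2 + ε)) := by
      filter_upwards [hCae m] with x hx
      have hb : (pd1 (u m) x) ^ 2 + ε ≤ C ^ 2 + ε := by
        have : (pd1 (u m) x) ^ 2 ≤ C ^ 2 := by
          rw [← sq_abs]
          exact pow_le_pow_left₀ (abs_nonneg _) hx 2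
        linarith
      have hpos : 0 < (pd1 (u m) x) ^ 2 + ε := by positivity
      have hCpos : 0 < C ^ 2 + ε := by positivity
      have hdiv : (u (m + 1) x - u m x) ^ 2 / (C ^ 2 + ε)
          ≤ (u (m + 1) x - u m x) ^ 2 / ((pd1 (u m) x) ^ 2 + ε) :=
        div_le_div_of_nonneg_left (sq_nonneg _) hpos hb
      calc (u (m + 1) x - u m x) ^ 2
          = (C ^ 2 + ε) * ((u (m + 1) x - u m x) ^ 2 / (C ^ 2 + ε)) := by
            field_simp
        _ ≤ (C ^ 2 + ε) * ((u (m + 1) x - u m x) ^ 2 / ((pd1 (u m) x) ^ 2 + ε)) :=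
            mul_le_mul_of_nonneg_left hdiv hCpos.le
    have h1 := integral_mono_ae hfint hgint hae
    rw [integral_const_mul] at h1
    have h2 : 2 * (C ^ 2 + ε) * D m = (C ^ 2 + ε) * ∫ x : ℝ × ℝ,
        (u (m + 1) x - u m x) ^ 2 / ((pd1 (u m) x) ^ 2 + ε) := by
      have h3 : D m = (1 / 2) * ∫ x : ℝ × ℝ,
          (u (m + 1) x - u m x) ^ 2 / ((pd1 (u m) x) ^ 2 + ε) := rfl
      rw [h3]; ring
    linarith
  -- express the eLpNorm and squeeze
  have hform : ∀ m, eLpNorm (fun x : ℝ × ℝ => u (m + 1) x - u m x) 2 volume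
      = ENNReal.ofReal (Real.sqrt (∫ x : ℝ × ℝ, (u (m + 1) x - u m x) ^ 2)) := by
    intro m
    rw [(hL2 m).eLpNorm_eq_integral_rpow_norm two_ne_zero ENNReal.ofNat_ne_top]
    have e1 : (2 : ENNReal).toReal = (2 : ℝ) := by norm_num
    have e2 : (∫ a : ℝ × ℝ, ‖u (m + 1) a - u m a‖ ^ (2 : ℝ))
        = ∫ x : ℝ × ℝ, (u (m + 1) x - u m x) ^ 2 := by
      apply integral_congr_ae
      filter_upwards with x
      rw [Real.rpow_two, Real.norm_eq_abs, sq_abs]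
    rw [e1, e2, Real.sqrt_eq_rpow]
    norm_num
  have hub : ∀ m, eLpNorm (fun x : ℝ × ℝ => u (m + 1) x - u m x) 2 volume
      ≤ ENNReal.ofReal (Real.sqrt (2 * (C ^ 2 + ε) * D m)) := by
    intro m
    rw [hform m]
    exact ENNReal.ofReal_le_ofReal (Real.sqrt_le_sqrt (hIbound m))
  have hglim : Tendsto (fun m => ENNReal.ofReal (Real.sqrt (2 * (C ^ 2 + ε) * D m)))
      atTop (nhds 0) := by
    have h1 : Tendsto (fun m => 2 * (C ^ 2 + ε) * D m) atTop (nhds 0) := by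
      have := hDto0.const_mul (2 * (C ^ 2 + ε))
      simpa using this
    have h2 : Tendsto (fun m => Real.sqrt (2 * (C ^ 2 + ε) * D m)) atTop (nhds 0) := by
      have := (Real.continuous_sqrt.tendsto 0).comp h1
      simpa [Function.comp_def] using this
    have h3 := (ENNReal.continuous_ofReal.tendsto 0).comp h2
    simpa [Function.comp_def] using h3
  exact tendsto_of_tendsto_of_tendsto_of_le_of_le tendsto_const_nhds hglim
    (fun m => zero_le) hub
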